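/- For every nonnegative integer n, ∑_{k=0}^{n} (-1)^k * k!/(k+1) * S(n,k) = ∑_{i=0}^{n} (-1)^i * C(n+1,i+1)/C(n+i,i) * S(n+i,i), i.e., the two explicit Stirling-number formulas for B_n agree (with S(0,0)=1 and S(n,0)=0 for n≥1). -/

import Mathlib

/-- Stirling numbers of the second kind (so S(0,0)=1 and S(n,0)=0 for n>=1). -/
def stirling2 : ℕ → ℕ → ℕ
  | 0, 0 => 1
  | 0, _ + 1 => 0
  | _ + 1, 0 => 0
  | n + 1, k + 1 => (k + 1) * stirling2 n (k + 1) + stirling2 n k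

open Finset

lemma stirling2_zero_right (n : ℕ) : stirling2 n 0 = if n = 0 then 1 else 0 := by
  cases n <;> rfl

lemma stirling2_eq_zero_of_lt : ∀ {n k : ℕ}, n < k → stirling2 n k = 0 := by
  intro n
  induction n with
  | zero => intro k h; cases k with
    | zero => omega
    | succ j => rfl
  | succ n ih =>
    intro k h
    cases k with
    | zero => omega
    | succ j =>
      show (j + 1) * stirling2 n (j + 1) + stirling2 n j = 0
      rw [ih (by omega), ih (by omega)]; ring

lemma stirling2_succ_succ (n k : ℕ) :
    stirling2 (n + 1) (k + 1) = (k + 1) * stirling2 n (k + 1) + stirling2 n k := rfl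

lemma L1 (n : ℕ) : ∀ k, ∑ m ∈ range (n + 1), n.choose m * stirling2 m k
    = stirling2 (n + 1) (k + 1) := by
  induction n with
  | zero =>
    intro k
    rw [Finset.sum_range_one]
    simp only [Nat.choose_self, one_mul]
    cases k with
    | zero => rfl
    | succ j =>
      rw [stirling2_eq_zero_of_lt (by omega), stirling2_succ_succ,
        stirling2_eq_zero_of_lt (by omega), stirling2_eq_zero_of_lt (by omega)]; ring
  | succ n ih =>
    intro k
    rw [Finset.sum_range_succ' (fun m => (n+1).choose m * stirling2 m k)]
    simp only [Nat.choose_succ_succ, Nat.choose_zero_right, add_mul, one_mul,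
      Nat.succ_eq_add_one]
    rw [Finset.sum_add_distrib]
    have h2 : (∑ m ∈ range (n + 1), n.choose (m + 1) * stirling2 (m + 1) k)
        + stirling2 0 k = stirling2 (n + 1) (k + 1) := by
      have := Finset.sum_range_succ' (fun m => n.choose m * stirling2 m k) (n + 1)
      simp only [Nat.choose_zero_right, one_mul] at this
      rw [← this, Finset.sum_range_succ, Nat.choose_succ_self, zero_mul, add_zero, ih]
    have hrw : (∑ x ∈ range (n + 1), n.choose x * stirling2 (x + 1) k) +
        (∑ x ∈ range (n + 1), n.choose (x + 1) * stirling2 (x + 1) k) + stirling2 0 k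
        = (∑ x ∈ range (n + 1), n.choose x * stirling2 (x + 1) k) + stirling2 (n+1) (k+1) := by
      omega
    rw [hrw]
    cases k with
    | zero =>
      have : ∀ m ∈ range (n + 1), n.choose m * stirling2 (m + 1) 0 = 0 := by
        intro m _; rw [stirling2_zero_right]; simp
      rw [Finset.sum_congr rfl this, Finset.sum_const_zero, zero_add,
        stirling2_succ_succ (n+1) 0, stirling2_zero_right (n+1)]
      simp
    | succ j =>
      have : ∀ m ∈ range (n + 1), n.choose m * stirling2 (m + 1) (j + 1)
          = (j + 1) * (n.choose m * stirling2 m (j + 1)) + n.choose m * stirling2 m j := by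
        intro m _; rw [stirling2_succ_succ]; ring
      rw [Finset.sum_congr rfl this, Finset.sum_add_distrib, ← Finset.mul_sum, ih, ih,
        stirling2_succ_succ (n+1) (j+1)]
      ring

lemma L2core (m : ℕ) : ∑ k ∈ range m, (-1:ℚ)^k * k.factorial * stirling2 m (k+1)
    = if m = 1 then 1 else 0 := by
  cases m with
  | zero => simp
  | succ m =>
    have expand : ∀ k ∈ range (m+1), (-1:ℚ)^k * k.factorial * stirling2 (m+1) (k+1)
        = (-1:ℚ)^k * (k+1).factorial * stirling2 m (k+1)
          + (-1:ℚ)^k * k.factorial * stirling2 m k := by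
      intro k _
      rw [stirling2_succ_succ, Nat.factorial_succ]
      push_cast
      ring
    rw [Finset.sum_congr rfl expand, Finset.sum_add_distrib]
    have hS1 : ∑ k ∈ range (m+1), (-1:ℚ)^k * (k+1).factorial * stirling2 m (k+1)
        = ∑ k ∈ range m, (-1:ℚ)^k * (k+1).factorial * stirling2 m (k+1) := by
      rw [Finset.sum_range_succ, stirling2_eq_zero_of_lt (Nat.lt_succ_self m)]
      simp
    have hS2 : ∑ k ∈ range (m+1), (-1:ℚ)^k * k.factorial * stirling2 m k
        = (∑ k ∈ range m, -((-1:ℚ)^k * (k+1).factorial * stirling2 m (k+1)))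
          + stirling2 m 0 := by
      rw [Finset.sum_range_succ' (fun k => (-1:ℚ)^k * k.factorial * stirling2 m k)]
      simp only [pow_succ, Nat.factorial_zero, pow_zero, Nat.cast_one, one_mul]
      congr 1
      apply Finset.sum_congr rfl
      intro k _
      ring
    rw [hS1, hS2, Finset.sum_neg_distrib]
    rw [stirling2_zero_right]
    rcases Nat.eq_zero_or_pos m with hm | hm
    · subst hm; norm_num
    · have : m ≠ 0 := by omega
      have h1 : m + 1 ≠ 1 := by omega
      simp [this, h1]

lemma L2 (m N : ℕ) (h : m ≤ N) :
    ∑ k ∈ range N, (-1:ℚ)^k * k.factorial * stirling2 m (k+1)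
    = if m = 1 then 1 else 0 := by
  rw [← L2core m]
  symm
  apply Finset.sum_subset (Finset.range_subset_range.2 h)
  intro k _ hk
  rw [stirling2_eq_zero_of_lt (by simp at hk; omega)]
  simp

open PowerSeries

lemma coeff_E (j : ℕ) : coeff (R := ℚ) j (exp ℚ - 1)
    = 1/j.factorial - if j = 0 then 1 else 0 := by
  rw [map_sub, coeff_exp, coeff_one]
  simp [eq_comm]

lemma coeff_E_pow (k : ℕ) : ∀ m, coeff (R := ℚ) m ((exp ℚ - 1)^k)
    = stirling2 m k * k.factorial / m.factorial := by
  induction k with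
  | zero =>
    intro m
    rw [pow_zero, coeff_one, stirling2_zero_right]
    cases m with
    | zero => norm_num
    | succ m => simp
  | succ k ih =>
    intro m
    rw [pow_succ, coeff_mul, Finset.Nat.sum_antidiagonal_eq_sum_range_succ_mk]
    simp only [ih, coeff_E]
    have expand : ∀ i ∈ range (m+1),
        (stirling2 i k * k.factorial / i.factorial : ℚ)
          * (1/(m-i).factorial - if m - i = 0 then 1 else 0)
        = ((m.choose i : ℚ) * stirling2 i k) * (k.factorial / m.factorial)
          - (if i = m then (stirling2 m k * k.factorial / m.factorial : ℚ) else 0) := by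
      intro i hi
      rw [Finset.mem_range] at hi
      have hi' : i ≤ m := by omega
      rw [Nat.cast_choose ℚ hi']
      rcases eq_or_ne i m with h | h
      · subst h
        simp only [Nat.sub_self, if_pos rfl, if_pos rfl]
        have h0 : (i.factorial : ℚ) ≠ 0 := Nat.cast_ne_zero.2 i.factorial_ne_zero
        field_simp
        simp [h0]
        rw [mul_div_cancel₀ _ h0, sub_self]
      · have h2 : m - i ≠ 0 := by omega
        simp only [if_neg h2, if_neg h]
        have h0 : (i.factorial : ℚ) ≠ 0 := Nat.cast_ne_zero.2 i.factorial_ne_zero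
        have h1 : ((m-i).factorial : ℚ) ≠ 0 := Nat.cast_ne_zero.2 (m-i).factorial_ne_zero
        have h3 : (m.factorial : ℚ) ≠ 0 := Nat.cast_ne_zero.2 m.factorial_ne_zero
        field_simp
        ring
    rw [Finset.sum_congr rfl expand, Finset.sum_sub_distrib, ← Finset.sum_mul]
    have hL1 : ∑ i ∈ range (m+1), ((m.choose i : ℚ) * stirling2 i k)
        = (stirling2 (m+1) (k+1) : ℚ) := by
      exact_mod_cast congrArg (Nat.cast : ℕ → ℚ) (L1 m k)
    rw [hL1, Finset.sum_ite_eq' (range (m+1)) m, if_pos (Finset.self_mem_range_succ m)]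
    rw [stirling2_succ_succ, Nat.factorial_succ]
    push_cast
    ring

noncomputable def fS : PowerSeries ℚ := PowerSeries.mk fun m => 1/(m+1).factorial

lemma X_mul_fS : (X : PowerSeries ℚ) * fS = exp ℚ - 1 := by
  ext n
  cases n with
  | zero => simp [fS, coeff_E]
  | succ n =>
    rw [coeff_succ_X_mul, coeff_E, if_neg (Nat.succ_ne_zero n)]
    simp [fS]

lemma constantCoeff_fS : constantCoeff (R := ℚ) fS = 1 := by
  simp [fS, ← coeff_zero_eq_constantCoeff]

lemma bPS_mul_fS : bernoulliPowerSeries ℚ * fS = 1 := by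
  have h := bernoulliPowerSeries_mul_exp_sub_one ℚ
  rw [← X_mul_fS] at h
  have h2 : (X : PowerSeries ℚ) * (bernoulliPowerSeries ℚ * fS) = X * 1 := by
    rw [mul_one]
    conv_rhs => rw [← h]
    ring
  exact mul_left_cancel₀ X_ne_zero h2

lemma coeff_fS_pow (n i : ℕ) : coeff (R := ℚ) n (fS ^ i)
    = stirling2 (n+i) i * i.factorial / (n+i).factorial := by
  have h : (X : PowerSeries ℚ)^i * fS^i = (exp ℚ - 1)^i := by
    rw [← mul_pow, X_mul_fS]
  have := congrArg (coeff (R := ℚ) (n + i)) h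
  rw [coeff_X_pow_mul, coeff_E_pow] at this
  exact this

lemma coeff_bPS (n : ℕ) : coeff (R := ℚ) n (bernoulliPowerSeries ℚ) = bernoulli n / n.factorial := by
  simp [bernoulliPowerSeries, coeff_mk]

lemma coeff_P (n : ℕ) :
    coeff (R := ℚ) n (∑ k ∈ range (n+1), C (R := ℚ) ((-1)^k / (k+1)) * (exp ℚ - 1)^k)
      = bernoulli n / n.factorial := by
  set P := ∑ k ∈ range (n+1), C (R := ℚ) ((-1)^k / (k+1)) * (exp ℚ - 1)^k with hP
  have hPE : ∀ m, m ≤ n + 1 → coeff (R := ℚ) m (P * (exp ℚ - 1)) = coeff (R := ℚ) m X := by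
    intro m hm
    rw [hP, Finset.sum_mul]
    have hterm : ∀ k ∈ range (n+1),
        (C (R := ℚ) ((-1)^k / (k+1)) * (exp ℚ - 1)^k) * (exp ℚ - 1)
        = C (R := ℚ) ((-1)^k / (k+1)) * (exp ℚ - 1)^(k+1) := by
      intro k _; rw [pow_succ]; ring
    rw [Finset.sum_congr rfl hterm, map_sum]
    simp only [coeff_C_mul, coeff_E_pow]
    have hterm2 : ∀ k ∈ range (n+1),
        ((-1:ℚ)^k / (k+1)) * (stirling2 m (k+1) * (k+1).factorial / m.factorial)
        = (1/m.factorial) * ((-1:ℚ)^k * k.factorial * stirling2 m (k+1)) := by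
      intro k _
      rw [Nat.factorial_succ]
      have : ((k:ℚ) + 1) ≠ 0 := by positivity
      push_cast
      field_simp
    rw [Finset.sum_congr rfl hterm2, ← Finset.mul_sum, L2 m (n+1) hm, coeff_X]
    rcases eq_or_ne m 1 with h | h
    · subst h; norm_num
    · simp [h]
  have hdvd : (X : PowerSeries ℚ)^(n+2) ∣ P * (exp ℚ - 1) - X := by
    rw [X_pow_dvd_iff]
    intro m hm
    rw [map_sub, hPE m (by omega), sub_self]
  have key : (P - bernoulliPowerSeries ℚ) * X
      = (P * (exp ℚ - 1) - X) * bernoulliPowerSeries ℚ := by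
    have hB := bernoulliPowerSeries_mul_exp_sub_one ℚ
    linear_combination (-P) * hB
  have hdvd2 : (X : PowerSeries ℚ)^(n+2) ∣ (P - bernoulliPowerSeries ℚ) * X :=
    key ▸ hdvd.mul_right _
  have hz : coeff (R := ℚ) (n+1) ((P - bernoulliPowerSeries ℚ) * X) = 0 :=
    X_pow_dvd_iff.1 hdvd2 (n+1) (by omega)
  rw [coeff_succ_mul_X, map_sub, sub_eq_zero] at hz
  rw [hz, coeff_bPS]

theorem formulaA (n : ℕ) :
    ∑ k ∈ Finset.range (n + 1), (-1 : ℚ) ^ k * (k.factorial : ℚ) / (k + 1) * stirling2 n k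
      = bernoulli n := by
  have h := coeff_P n
  rw [map_sum] at h
  simp only [coeff_C_mul, coeff_E_pow] at h
  have h2 := congrArg (fun x => (n.factorial : ℚ) * x) h
  rw [Finset.mul_sum] at h2
  have hn : (n.factorial : ℚ) ≠ 0 := Nat.cast_ne_zero.2 n.factorial_ne_zero
  rw [mul_div_cancel₀ _ hn] at h2
  rw [← h2]
  apply Finset.sum_congr rfl
  intro k _
  have : ((k:ℚ) + 1) ≠ 0 := by positivity
  field_simp

lemma fS_mul_G (n : ℕ) :
    fS * (∑ i ∈ range (n+1), C (R := ℚ) ((-1)^i * ((n+1).choose (i+1))) * fS^i)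
      = 1 - (1 - fS)^(n+1) := by
  have hpow : (1 - fS)^(n+1) = ((-fS) + 1)^(n+1) := by ring_nf
  rw [hpow, add_pow]
  simp only [one_pow, mul_one]
  rw [Finset.sum_range_succ' (fun j => (-fS)^j * ((n+1).choose j : PowerSeries ℚ))]
  simp only [pow_zero, Nat.choose_zero_right, Nat.cast_one, one_mul]
  rw [Finset.mul_sum]
  have hterm : ∀ i ∈ range (n+1),
      fS * (C (R := ℚ) ((-1)^i * ((n+1).choose (i+1))) * fS^i)
      = -((-fS)^(i+1) * (((n+1).choose (i+1) : ℕ) : PowerSeries ℚ)) := by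
    intro i _
    rw [map_mul, map_pow, map_neg, map_one, map_natCast]
    ring
  rw [Finset.sum_congr rfl hterm, Finset.sum_neg_distrib]
  ring

lemma coeff_G (n : ℕ) :
    coeff (R := ℚ) n (∑ i ∈ range (n+1), C (R := ℚ) ((-1)^i * ((n+1).choose (i+1))) * fS^i)
      = bernoulli n / n.factorial := by
  set G := ∑ i ∈ range (n+1), C (R := ℚ) ((-1)^i * ((n+1).choose (i+1))) * fS^i with hG
  have hGb : G = bernoulliPowerSeries ℚ - bernoulliPowerSeries ℚ * (1 - fS)^(n+1) := by
    calc G = (bernoulliPowerSeries ℚ * fS) * G := by rw [bPS_mul_fS, one_mul]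
    _ = bernoulliPowerSeries ℚ * (fS * G) := by ring
    _ = bernoulliPowerSeries ℚ * (1 - (1 - fS)^(n+1)) := by rw [fS_mul_G]
    _ = bernoulliPowerSeries ℚ - bernoulliPowerSeries ℚ * (1 - fS)^(n+1) := by ring
  have hdvd : (X : PowerSeries ℚ)^(n+1) ∣ bernoulliPowerSeries ℚ * (1 - fS)^(n+1) := by
    apply Dvd.dvd.mul_left
    apply pow_dvd_pow_of_dvd
    rw [X_dvd_iff, map_sub, constantCoeff_fS, constantCoeff_one, sub_self]
  have hz : coeff (R := ℚ) n (bernoulliPowerSeries ℚ * (1 - fS)^(n+1)) = 0 :=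
    X_pow_dvd_iff.1 hdvd n (by omega)
  rw [hGb, map_sub, hz, sub_zero, coeff_bPS]

theorem formulaB (n : ℕ) :
    ∑ i ∈ Finset.range (n + 1),
          (-1 : ℚ) ^ i * ((n + 1).choose (i + 1) : ℚ) / ((n + i).choose i : ℚ)
            * stirling2 (n + i) i = bernoulli n := by
  have h := coeff_G n
  rw [map_sum] at h
  simp only [coeff_C_mul, coeff_fS_pow] at h
  have h2 := congrArg (fun x => (n.factorial : ℚ) * x) h
  rw [Finset.mul_sum] at h2
  have hn : (n.factorial : ℚ) ≠ 0 := Nat.cast_ne_zero.2 n.factorial_ne_zero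
  rw [mul_div_cancel₀ _ hn] at h2
  rw [← h2]
  apply Finset.sum_congr rfl
  intro i _
  have hch : ((n+i).choose i : ℚ) = (n+i).factorial / (i.factorial * n.factorial) := by
    rw [Nat.cast_choose ℚ (Nat.le_add_left i n), Nat.add_sub_cancel]
  rw [hch]
  have h0 : (i.factorial : ℚ) ≠ 0 := Nat.cast_ne_zero.2 i.factorial_ne_zero
  have h1 : ((n+i).factorial : ℚ) ≠ 0 := Nat.cast_ne_zero.2 (n+i).factorial_ne_zero
  field_simp

/-- The two explicit Stirling-number formulas for `B_n` agree:
`∑_{k=0}^n (-1)^k k!/(k+1) S(n,k) = ∑_{i=0}^n (-1)^i C(n+1,i+1)/C(n+i,i) S(n+i,i)`. -/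
theorem two_stirling2_formulas_agree (n : ℕ) :
    ∑ k ∈ Finset.range (n + 1), (-1 : ℚ) ^ k * (k.factorial : ℚ) / (k + 1) * stirling2 n k
      = ∑ i ∈ Finset.range (n + 1),
          (-1 : ℚ) ^ i * ((n + 1).choose (i + 1) : ℚ) / ((n + i).choose i : ℚ)
            * stirling2 (n + i) i := by
  exact (formulaA n).trans (formulaB n).symm
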